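/- Let m,N≥1 be integers, α>1, L>0, K>0, B>0, ε>0, and let E⊆{x∈ℤ^m : |x|<N}. Let D:E→ℂ with |D(x)|≥1/B for all x∈E, and let S:E×E→ℂ with |S(x,x')| ≤ K e^{−αL|x−x'|_α} for all x,x'∈E. If ε·K·B·(2N)^m ≤ 1/2, then the matrix T defined by T(x,x)=D(x)−εS(x,x) on the diagonal and T(x,x')=−εS(x,x') off the diagonal is invertible, its inverse satisfies ‖T^{−1}‖ ≤ 2B in operator norm on ℓ²(E), and for all x≠x' in E, |T^{−1}(x,x')| ≤ 2εKB² e^{−αL|x−x'|_α}. -/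

import Mathlib

open scoped BigOperators

noncomputable section

/-- `|x|_α = Σ_j |x_j|^{1/α}` for an integer vector. -/
def adist (α : ℝ) {m : ℕ} (x : Fin m → ℤ) : ℝ :=
  ∑ j, |(x j : ℝ)| ^ (1 / α)

/-- The ℓ² operator norm of a matrix indexed by a finite set `E ⊆ ℤ^m`. -/
def opNorm {m : ℕ} {E : Finset (Fin m → ℤ)} (T : Matrix E E ℂ) : ℝ :=
  ‖Matrix.toEuclideanCLM (𝕜 := ℂ) T‖

open scoped Matrix.Norms.L2Operator

section Aux

variable {ι : Type*} [Fintype ι] [DecidableEq ι]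

lemma aux_clm_apply_coord (M : Matrix ι ι ℂ) (x : EuclideanSpace ℂ ι) (i : ι) :
    (Matrix.toEuclideanCLM (𝕜 := ℂ) M) x i = ∑ j, M i j * x j := rfl

lemma aux_coord_le_norm (x : EuclideanSpace ℂ ι) (i : ι) : ‖x i‖ ≤ ‖x‖ := by
  rw [EuclideanSpace.norm_eq]
  calc ‖x i‖ = Real.sqrt (‖x i‖ ^ 2) := (Real.sqrt_sq (norm_nonneg _)).symm
    _ ≤ _ := Real.sqrt_le_sqrt (Finset.single_le_sum (f := fun j => ‖x j‖ ^ 2)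
        (fun j _ => sq_nonneg _) (Finset.mem_univ i))

lemma aux_entry_le_norm (M : Matrix ι ι ℂ) (i j : ι) : ‖M i j‖ ≤ ‖M‖ := by
  have h := (Matrix.toEuclideanCLM (𝕜 := ℂ) M).le_opNorm (EuclideanSpace.single j 1)
  rw [EuclideanSpace.norm_single, norm_one, mul_one] at h
  have hc : (Matrix.toEuclideanCLM (𝕜 := ℂ) M) (EuclideanSpace.single j 1) i = M i j := by
    rw [aux_clm_apply_coord]
    simp [EuclideanSpace.single_apply]
  calc ‖M i j‖ = ‖(Matrix.toEuclideanCLM (𝕜 := ℂ) M) (EuclideanSpace.single j 1) i‖ := by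
        rw [hc]
    _ ≤ ‖(Matrix.toEuclideanCLM (𝕜 := ℂ) M) (EuclideanSpace.single j 1)‖ := aux_coord_le_norm _ _
    _ ≤ ‖M‖ := h

lemma aux_norm_diagonal_le (v : ι → ℂ) {b : ℝ} (hb : 0 ≤ b) (h : ∀ i, ‖v i‖ ≤ b) :
    ‖Matrix.diagonal v‖ ≤ b := by
  rw [Matrix.cstar_norm_def]
  apply ContinuousLinearMap.opNorm_le_bound _ hb
  intro x
  rw [EuclideanSpace.norm_eq, EuclideanSpace.norm_eq, ← Real.sqrt_sq hb,
    ← Real.sqrt_mul (sq_nonneg b)]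
  apply Real.sqrt_le_sqrt
  rw [Finset.mul_sum]
  apply Finset.sum_le_sum
  intro i _
  have hc : (Matrix.toEuclideanCLM (𝕜 := ℂ) (Matrix.diagonal v)) x i = v i * x i := by
    rw [aux_clm_apply_coord]
    simp [Matrix.diagonal_apply, ite_mul]
  rw [hc, norm_mul, mul_pow]
  exact mul_le_mul_of_nonneg_right (pow_le_pow_left₀ (norm_nonneg _) (h i) 2) (sq_nonneg _)

lemma aux_norm_le_card_mul (M : Matrix ι ι ℂ) {c : ℝ} (hc : 0 ≤ c)
    (h : ∀ i j, ‖M i j‖ ≤ c) : ‖M‖ ≤ (Fintype.card ι) * c := by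
  rw [Matrix.cstar_norm_def]
  apply ContinuousLinearMap.opNorm_le_bound _ (by positivity)
  intro x
  set n : ℝ := (Fintype.card ι : ℝ) with hn
  have hn0 : 0 ≤ n := by positivity
  set s : ℝ := ∑ j, ‖x j‖ with hs
  have hs0 : 0 ≤ s := Finset.sum_nonneg fun j _ => norm_nonneg _
  have hsx : s ≤ Real.sqrt n * ‖x‖ := by
    have h2 : s ^ 2 ≤ (∑ _j : ι, (1:ℝ) ^ 2) * (∑ j, ‖x j‖ ^ 2) := by
      have := Finset.sum_mul_sq_le_sq_mul_sq Finset.univ (fun _ => (1:ℝ)) (fun j => ‖x j‖)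
      simpa using this
    have h3 : s ^ 2 ≤ n * ‖x‖ ^ 2 := by
      rw [EuclideanSpace.norm_eq, Real.sq_sqrt (Finset.sum_nonneg fun j _ => sq_nonneg _)]
      simpa [hn] using h2
    calc s = Real.sqrt (s ^ 2) := (Real.sqrt_sq hs0).symm
      _ ≤ Real.sqrt (n * ‖x‖ ^ 2) := Real.sqrt_le_sqrt h3
      _ = Real.sqrt n * ‖x‖ := by
          rw [Real.sqrt_mul hn0, Real.sqrt_sq (norm_nonneg _)]
  have hcoord : ∀ i, ‖(Matrix.toEuclideanCLM (𝕜 := ℂ) M) x i‖ ≤ c * s := by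
    intro i
    rw [aux_clm_apply_coord]
    calc ‖∑ j, M i j * x j‖ ≤ ∑ j, ‖M i j * x j‖ := norm_sum_le _ _
      _ ≤ ∑ j, c * ‖x j‖ := by
          apply Finset.sum_le_sum; intro j _; rw [norm_mul]; gcongr; exact h i j
      _ = c * s := by rw [hs, Finset.mul_sum]
  calc ‖(Matrix.toEuclideanCLM (𝕜 := ℂ) M) x‖
      = Real.sqrt (∑ i, ‖(Matrix.toEuclideanCLM (𝕜 := ℂ) M) x i‖ ^ 2) :=
        EuclideanSpace.norm_eq _
    _ ≤ Real.sqrt (∑ _i : ι, (c * s) ^ 2) := by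
        apply Real.sqrt_le_sqrt; apply Finset.sum_le_sum; intro i _
        exact pow_le_pow_left₀ (norm_nonneg _) (hcoord i) 2
    _ = Real.sqrt n * (c * s) := by
        rw [Finset.sum_const, Finset.card_univ, nsmul_eq_mul, Real.sqrt_mul hn0,
          Real.sqrt_sq (by positivity)]
    _ ≤ Real.sqrt n * (c * (Real.sqrt n * ‖x‖)) := by gcongr
    _ = (Real.sqrt n * Real.sqrt n) * c * ‖x‖ := by ring
    _ = n * c * ‖x‖ := by rw [Real.mul_self_sqrt hn0]

end Aux

lemma aux_adist_nonneg {α : ℝ} {m : ℕ} (x : Fin m → ℤ) : 0 ≤ adist α x :=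
  Finset.sum_nonneg fun _ _ => Real.rpow_nonneg (abs_nonneg _) _

lemma aux_real_add_rpow_le {a b p : ℝ} (ha : 0 ≤ a) (hb : 0 ≤ b) (hp0 : 0 ≤ p) (hp1 : p ≤ 1) :
    (a + b) ^ p ≤ a ^ p + b ^ p := by
  have key := NNReal.rpow_add_le_add_rpow (Real.toNNReal a) (Real.toNNReal b) hp0 hp1
  have h1 : ((Real.toNNReal a + Real.toNNReal b : NNReal) : ℝ) = a + b := by
    push_cast [Real.coe_toNNReal _ ha, Real.coe_toNNReal _ hb]; ring
  calc (a + b) ^ p = (((Real.toNNReal a + Real.toNNReal b : NNReal) : ℝ)) ^ p := by rw [h1]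
    _ = (((Real.toNNReal a + Real.toNNReal b) ^ p : NNReal) : ℝ) := by
        rw [NNReal.coe_rpow]
    _ ≤ ((Real.toNNReal a ^ p + Real.toNNReal b ^ p : NNReal) : ℝ) := by exact_mod_cast key
    _ = a ^ p + b ^ p := by
        push_cast [NNReal.coe_rpow, Real.coe_toNNReal _ ha, Real.coe_toNNReal _ hb]; ring

lemma aux_adist_triangle {α : ℝ} (hα : 1 < α) {m : ℕ} (u v : Fin m → ℤ) :
    adist α (u + v) ≤ adist α u + adist α v := by
  rw [adist, adist, adist, ← Finset.sum_add_distrib]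
  apply Finset.sum_le_sum
  intro j _
  have hp0 : 0 ≤ 1 / α := by positivity
  have hp1 : 1 / α ≤ 1 := by
    rw [div_le_one (by linarith)]; linarith
  have habs : |((u + v) j : ℝ)| ≤ |(u j : ℝ)| + |(v j : ℝ)| := by
    rw [Pi.add_apply]; push_cast; exact abs_add_le _ _
  calc |((u + v) j : ℝ)| ^ (1 / α) ≤ (|(u j : ℝ)| + |(v j : ℝ)|) ^ (1 / α) :=
      Real.rpow_le_rpow (abs_nonneg _) habs hp0
    _ ≤ _ := aux_real_add_rpow_le (abs_nonneg _) (abs_nonneg _) hp0 hp1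

set_option maxHeartbeats 1000000 in
/-- Neumann-series inversion of a diagonally dominant matrix with
sub-exponentially decaying off-diagonal perturbation. -/
theorem neumann_inverse_diag_dominant {m N : ℕ} (hm : 1 ≤ m) (hN : 1 ≤ N)
    {α L K B ε : ℝ} (hα : 1 < α) (hL : 0 < L) (hK : 0 < K) (hB : 0 < B) (hε : 0 < ε)
    (E : Finset (Fin m → ℤ)) (hE : ∀ x ∈ E, ∀ j, |x j| < (N : ℤ))
    (D : E → ℂ) (hD : ∀ x : E, 1 / B ≤ ‖D x‖)
    (S : Matrix E E ℂ)
    (hS : ∀ x x' : E,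
      ‖S x x'‖ ≤ K * Real.exp (-(α * L * adist α ((x : Fin m → ℤ) - (x' : Fin m → ℤ)))))
    (hsmall : ε * K * B * (2 * (N : ℝ)) ^ m ≤ 1 / 2) :
    IsUnit (Matrix.diagonal D - (ε : ℂ) • S) ∧
      opNorm (Matrix.diagonal D - (ε : ℂ) • S)⁻¹ ≤ 2 * B ∧
      ∀ x x' : E, x ≠ x' →
        ‖(Matrix.diagonal D - (ε : ℂ) • S)⁻¹ x x'‖ ≤
          2 * ε * K * B ^ 2 *
            Real.exp (-(α * L * adist α ((x : Fin m → ℤ) - (x' : Fin m → ℤ)))) := by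
  classical
  have hα0 : (0:ℝ) < α := by linarith
  have hαL : 0 < α * L := by positivity
  set T : Matrix E E ℂ := Matrix.diagonal D - (ε : ℂ) • S with hT
  -- basic facts about D
  have hBinv : (0:ℝ) < 1 / B := by positivity
  have hD0 : ∀ x : E, D x ≠ 0 := by
    intro x hx
    have := hD x
    rw [hx, norm_zero] at this
    linarith
  set d : E → ℂ := fun x => (D x)⁻¹ with hd
  have hdB : ∀ x : E, ‖d x‖ ≤ B := by
    intro x
    have hpos : 0 < ‖D x‖ := lt_of_lt_of_le hBinv (hD x)
    rw [hd]
    simp only [norm_inv]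
    rw [inv_le_comm₀ hpos hB]
    calc B⁻¹ = 1 / B := (one_div B).symm
      _ ≤ ‖D x‖ := hD x
  -- the decay weight
  set a : E → E → ℝ :=
    fun x y => Real.exp (-(α * L * adist α ((x : Fin m → ℤ) - (y : Fin m → ℤ)))) with ha
  have hapos : ∀ x y : E, 0 < a x y := fun _ _ => Real.exp_pos _
  have hale1 : ∀ x y : E, a x y ≤ 1 := by
    intro x y
    rw [ha]
    rw [Real.exp_le_one_iff]
    have := aux_adist_nonneg (α := α) ((x : Fin m → ℤ) - (y : Fin m → ℤ))
    nlinarith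
  have hamul : ∀ x y z : E, a x z * a z y ≤ a x y := by
    intro x y z
    rw [ha, ← Real.exp_add, Real.exp_le_exp]
    have htri := aux_adist_triangle hα ((x : Fin m → ℤ) - (z : Fin m → ℤ))
      ((z : Fin m → ℤ) - (y : Fin m → ℤ))
    rw [sub_add_sub_cancel] at htri
    nlinarith
  -- the perturbation matrix A
  set A : Matrix E E ℂ := (ε : ℂ) • (Matrix.diagonal d * S) with hA
  set c : ℝ := ε * B * K with hc
  have hcpos : 0 < c := by positivity
  have hAentry : ∀ x y : E, ‖A x y‖ ≤ c * a x y := by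
    intro x y
    rw [hA]
    simp only [Matrix.smul_apply, Matrix.diagonal_mul, smul_eq_mul]
    rw [norm_mul, norm_mul]
    have hnε : ‖(ε : ℂ)‖ = ε := by
      rw [Complex.norm_real]; exact Real.norm_of_nonneg hε.le
    rw [hnε]
    calc ε * (‖d x‖ * ‖S x y‖) ≤ ε * (B * (K * a x y)) := by
          apply mul_le_mul_of_nonneg_left _ hε.le
          apply mul_le_mul (hdB x) (hS x y) (norm_nonneg _) hB.le
      _ = c * a x y := by rw [hc]; ring
  have hAc : ∀ x y : E, ‖A x y‖ ≤ c := by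
    intro x y
    calc ‖A x y‖ ≤ c * a x y := hAentry x y
      _ ≤ c * 1 := mul_le_mul_of_nonneg_left (hale1 x y) hcpos.le
      _ = c := mul_one c
  -- cardinality bound
  set n : ℝ := (E.card : ℝ) with hn
  have hn0 : (0:ℝ) ≤ n := by positivity
  have hcard : n ≤ (2 * (N : ℝ)) ^ m := by
    have h1 : E ⊆ Fintype.piFinset (fun _ : Fin m => Finset.Ioo (-(N : ℤ)) (N : ℤ)) := by
      intro x hx
      rw [Fintype.mem_piFinset]
      intro j
      rcases abs_lt.mp (hE x hx j) with ⟨hl, hr⟩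
      exact Finset.mem_Ioo.mpr ⟨hl, hr⟩
    have h2 := Finset.card_le_card h1
    rw [Fintype.card_piFinset] at h2
    have h3 : ∀ j : Fin m, (Finset.Ioo (-(N : ℤ)) (N : ℤ)).card = 2 * N - 1 := by
      intro j
      rw [Int.card_Ioo]
      omega
    rw [Finset.prod_congr rfl (fun j _ => h3 j), Finset.prod_const, Finset.card_univ,
      Fintype.card_fin] at h2
    calc n ≤ (((2 * N - 1) ^ m : ℕ) : ℝ) := by rw [hn]; exact_mod_cast h2
      _ = (((2 * N - 1 : ℕ) : ℝ)) ^ m := by push_cast; ring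
      _ ≤ (((2 * N : ℕ) : ℝ)) ^ m := by
          apply pow_le_pow_left₀ (by positivity)
          exact_mod_cast Nat.sub_le _ _
      _ = (2 * (N : ℝ)) ^ m := by push_cast; ring
  set q : ℝ := c * n with hqdef
  have hq0 : 0 ≤ q := by positivity
  have hq : q ≤ 1 / 2 := by
    calc q = c * n := hqdef
      _ ≤ c * (2 * (N : ℝ)) ^ m := mul_le_mul_of_nonneg_left hcard hcpos.le
      _ = ε * K * B * (2 * (N : ℝ)) ^ m := by rw [hc]; ring
      _ ≤ 1 / 2 := hsmall
  -- norm of A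
  have hAnorm : ‖A‖ ≤ q := by
    have h := aux_norm_le_card_mul A hcpos.le hAc
    calc ‖A‖ ≤ (Fintype.card E : ℝ) * c := h
      _ = q := by rw [Fintype.card_coe, hqdef, hn]; ring
  have hAhalf : ‖A‖ ≤ 1 / 2 := hAnorm.trans hq
  have hAlt1 : ‖A‖ < 1 := lt_of_le_of_lt hAhalf (by norm_num)
  -- units
  have honenorm : ‖(1 : Matrix E E ℂ)‖ ≤ 1 := by
    rw [Matrix.cstar_norm_def, map_one]
    exact ContinuousLinearMap.norm_id_le
  have hUnit1A : IsUnit (1 - A) := by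
    have h := (Units.oneSub A hAlt1).isUnit
    rwa [Units.val_oneSub] at h
  have hDd : Matrix.diagonal D * Matrix.diagonal d = 1 := by
    rw [Matrix.diagonal_mul_diagonal]
    have : (fun x => D x * d x) = fun _ => (1:ℂ) := by
      funext x
      rw [hd]
      exact mul_inv_cancel₀ (hD0 x)
    rw [this, Matrix.diagonal_one]
  have hdD : Matrix.diagonal d * Matrix.diagonal D = 1 := by
    rw [Matrix.diagonal_mul_diagonal]
    have : (fun x => d x * D x) = fun _ => (1:ℂ) := by
      funext x
      rw [hd]
      exact inv_mul_cancel₀ (hD0 x)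
    rw [this, Matrix.diagonal_one]
  have hTfact : T = Matrix.diagonal D * (1 - A) := by
    rw [hT, hA, Matrix.mul_sub, Matrix.mul_one, Matrix.mul_smul, ← Matrix.mul_assoc, hDd,
      Matrix.one_mul]
  have hUnitT : IsUnit T := by
    rw [hTfact]
    have hUnitD : IsUnit (Matrix.diagonal D) := ⟨⟨_, _, hDd, hdD⟩, rfl⟩
    exact hUnitD.mul hUnit1A
  have hdet : IsUnit T.det := (Matrix.isUnit_iff_isUnit_det T).mp hUnitT
  have hTTinv : T * T⁻¹ = 1 := Matrix.mul_nonsing_inv T hdet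
  have hdiaginv : (Matrix.diagonal D)⁻¹ = Matrix.diagonal d := Matrix.inv_eq_right_inv hDd
  have hdet1A : IsUnit (1 - A).det := (Matrix.isUnit_iff_isUnit_det _).mp hUnit1A
  have hVmul : (1 - A) * (1 - A)⁻¹ = 1 := Matrix.mul_nonsing_inv _ hdet1A
  have hInvEq : T⁻¹ = (1 - A)⁻¹ * Matrix.diagonal d := by
    rw [hTfact, Matrix.mul_inv_rev, hdiaginv]
  have huinvnorm : ‖(1 - A)⁻¹‖ ≤ 2 := by
    have h2 := hVmul
    rw [sub_mul, Matrix.one_mul] at h2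
    have hid : (1 - A)⁻¹ = 1 + A * (1 - A)⁻¹ := by
      calc (1 - A)⁻¹ = ((1 - A)⁻¹ - A * (1 - A)⁻¹) + A * (1 - A)⁻¹ := by abel
        _ = 1 + A * (1 - A)⁻¹ := by rw [h2]
    have h3 : ‖(1 - A)⁻¹‖ ≤ 1 + ‖A‖ * ‖(1 - A)⁻¹‖ := by
      calc ‖(1 - A)⁻¹‖ = ‖(1 : Matrix E E ℂ) + A * (1 - A)⁻¹‖ := by rw [← hid]
        _ ≤ ‖(1 : Matrix E E ℂ)‖ + ‖A * (1 - A)⁻¹‖ := norm_add_le _ _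
        _ ≤ 1 + ‖A‖ * ‖(1 - A)⁻¹‖ := add_le_add honenorm (norm_mul_le _ _)
    nlinarith [norm_nonneg ((1 - A)⁻¹ : Matrix E E ℂ)]
  have hTinvnorm : ‖T⁻¹‖ ≤ 2 * B := by
    rw [hInvEq]
    calc ‖(1 - A)⁻¹ * Matrix.diagonal d‖
        ≤ ‖(1 - A)⁻¹‖ * ‖Matrix.diagonal d‖ := norm_mul_le _ _
      _ ≤ 2 * B := by
          apply mul_le_mul huinvnorm (aux_norm_diagonal_le d hB.le hdB) (norm_nonneg _)
            (by norm_num)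
  have hTinv_entry : ∀ y z : E, ‖T⁻¹ y z‖ ≤ 2 * B :=
    fun y z => (aux_entry_le_norm _ y z).trans hTinvnorm
  -- Neumann iteration identities
  have hdT : Matrix.diagonal d * T = 1 - A := by
    rw [hTfact, ← Matrix.mul_assoc, hdD, Matrix.one_mul]
  have hbase : T⁻¹ = Matrix.diagonal d + A * T⁻¹ := by
    have h0 : (1 - A) * T⁻¹ = Matrix.diagonal d := by
      calc (1 - A) * T⁻¹ = (Matrix.diagonal d * T) * T⁻¹ := by rw [hdT]
        _ = Matrix.diagonal d * (T * T⁻¹) := by rw [Matrix.mul_assoc]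
        _ = Matrix.diagonal d := by rw [hTTinv, Matrix.mul_one]
    rw [sub_mul, Matrix.one_mul] at h0
    calc T⁻¹ = (T⁻¹ - A * T⁻¹) + A * T⁻¹ := by abel
      _ = Matrix.diagonal d + A * T⁻¹ := by rw [h0]
  have hiter : ∀ j : ℕ,
      T⁻¹ = (∑ i ∈ Finset.range j, A ^ i * Matrix.diagonal d) + A ^ j * T⁻¹ := by
    intro j
    induction j with
    | zero => simp
    | succ j ih =>
      have hstep : A ^ j * T⁻¹ = A ^ j * Matrix.diagonal d + A ^ (j + 1) * T⁻¹ := by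
        conv_lhs => rw [hbase]
        rw [Matrix.mul_add, ← Matrix.mul_assoc, ← pow_succ]
      rw [Finset.sum_range_succ]
      calc T⁻¹ = (∑ i ∈ Finset.range j, A ^ i * Matrix.diagonal d) + A ^ j * T⁻¹ := ih
        _ = (∑ i ∈ Finset.range j, A ^ i * Matrix.diagonal d) +
            (A ^ j * Matrix.diagonal d + A ^ (j + 1) * T⁻¹) := by rw [hstep]
        _ = _ := by rw [add_assoc]
  -- entrywise bound on powers of A
  have hpow : ∀ k : ℕ, ∀ x y : E, ‖(A ^ (k + 1)) x y‖ ≤ c ^ (k + 1) * n ^ k * a x y := by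
    intro k
    induction k with
    | zero =>
      intro x y
      simpa using hAentry x y
    | succ k ih =>
      intro x y
      have hmul : A ^ (k + 2) = A ^ (k + 1) * A := pow_succ A (k + 1)
      rw [hmul, Matrix.mul_apply]
      calc ‖∑ z, (A ^ (k + 1)) x z * A z y‖
          ≤ ∑ z, ‖(A ^ (k + 1)) x z * A z y‖ := norm_sum_le _ _
        _ ≤ ∑ _z : E, c ^ (k + 2) * n ^ k * a x y := by
            apply Finset.sum_le_sum
            intro z _
            rw [norm_mul]
            calc ‖(A ^ (k + 1)) x z‖ * ‖A z y‖
                ≤ (c ^ (k + 1) * n ^ k * a x z) * (c * a z y) := by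
                  apply mul_le_mul (ih x z) (hAentry z y) (norm_nonneg _)
                  exact mul_nonneg (mul_nonneg (pow_nonneg hcpos.le _) (pow_nonneg hn0 _)) (hapos x z).le
              _ = (c ^ (k + 2) * n ^ k) * (a x z * a z y) := by ring
              _ ≤ (c ^ (k + 2) * n ^ k) * a x y := by
                  apply mul_le_mul_of_nonneg_left (hamul x y z)
                  exact mul_nonneg (pow_nonneg hcpos.le _) (pow_nonneg hn0 _)
              _ = c ^ (k + 2) * n ^ k * a x y := by ring
        _ = n * (c ^ (k + 2) * n ^ k * a x y) := by
            rw [Finset.sum_const, Finset.card_univ, Fintype.card_coe, nsmul_eq_mul, hn]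
        _ = c ^ (k + 1 + 1) * n ^ (k + 1) * a x y := by ring
  -- geometric sum
  have hgeo : ∀ k : ℕ, ∑ i ∈ Finset.range k, ((1:ℝ) / 2) ^ i = 2 - 2 * (1 / 2) ^ k := by
    intro k
    induction k with
    | zero => simp
    | succ k ih => rw [Finset.sum_range_succ, ih]; ring
  refine ⟨hUnitT, ?_, ?_⟩
  · show opNorm T⁻¹ ≤ 2 * B
    rw [opNorm, ← Matrix.cstar_norm_def]
    exact hTinvnorm
  · intro x x' hne
    set w : E → E → ℝ :=
      fun y z => Real.exp (α * L * adist α ((y : Fin m → ℤ) - (z : Fin m → ℤ))) with hw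
    have hwa : ∀ y z : E, a y z * w y z = 1 := by
      intro y z
      rw [ha, hw, ← Real.exp_add]
      simp
    have hwpos : ∀ y z : E, 0 < w y z := fun _ _ => Real.exp_pos _
    set P : Finset (E × E) := Finset.univ.filter (fun p : E × E => p.1 ≠ p.2) with hP
    have hxmem : (x, x') ∈ P := by simp [hP, hne]
    have hPne : P.Nonempty := ⟨(x, x'), hxmem⟩
    set f : E × E → ℝ := fun p => ‖T⁻¹ p.1 p.2‖ * w p.1 p.2 with hf
    set M : ℝ := P.sup' hPne f with hMdef
    have hM0 : 0 ≤ M := by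
      have := Finset.le_sup' f hxmem
      have hf0 : 0 ≤ f (x, x') := mul_nonneg (norm_nonneg _) (hwpos _ _).le
      exact hf0.trans this
    have hfM : ∀ y z : E, y ≠ z → ‖T⁻¹ y z‖ ≤ M * a y z := by
      intro y z hyz
      have hmem : (y, z) ∈ P := by simp [hP, hyz]
      have hle : f (y, z) ≤ M := Finset.le_sup' f hmem
      calc ‖T⁻¹ y z‖ = (‖T⁻¹ y z‖ * w y z) * a y z := by
            rw [mul_assoc, mul_comm (w y z) (a y z), hwa y z, mul_one]
        _ ≤ M * a y z := mul_le_mul_of_nonneg_right hle (hapos _ _).le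
    -- the core estimate
    have hEst : ∀ k : ℕ, ∀ y z : E, y ≠ z →
        ‖T⁻¹ y z‖ ≤ (2 * B * c + (1 / 2) ^ (k + 1) * M) * a y z := by
      intro k y z hyz
      have hid := hiter (k + 1)
      have hentry : T⁻¹ y z =
          (∑ i ∈ Finset.range (k + 1), (A ^ i * Matrix.diagonal d) y z) +
          (A ^ (k + 1) * T⁻¹) y z := by
        conv_lhs => rw [hid]
        rw [Matrix.add_apply, Matrix.sum_apply]
      -- term 1
      have hterm1 : ‖∑ i ∈ Finset.range (k + 1), (A ^ i * Matrix.diagonal d) y z‖ ≤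
          B * c * (2 - 2 * (1 / 2) ^ k) * a y z := by
        calc ‖∑ i ∈ Finset.range (k + 1), (A ^ i * Matrix.diagonal d) y z‖
            ≤ ∑ i ∈ Finset.range (k + 1), ‖(A ^ i * Matrix.diagonal d) y z‖ :=
              norm_sum_le _ _
          _ = ∑ i ∈ Finset.range k, ‖(A ^ (i + 1) * Matrix.diagonal d) y z‖ +
              ‖(A ^ 0 * Matrix.diagonal d) y z‖ := Finset.sum_range_succ' _ k
          _ ≤ ∑ i ∈ Finset.range k, B * c * (1 / 2) ^ i * a y z + 0 := by
              gcongr with i hi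
              · rw [Matrix.mul_diagonal, norm_mul]
                calc ‖(A ^ (i + 1)) y z‖ * ‖d z‖
                    ≤ (c ^ (i + 1) * n ^ i * a y z) * B := by
                      apply mul_le_mul (hpow i y z) (hdB z) (norm_nonneg _)
                      exact mul_nonneg (mul_nonneg (pow_nonneg hcpos.le _) (pow_nonneg hn0 _)) (hapos y z).le
                  _ = B * c * (c * n) ^ i * a y z := by ring
                  _ ≤ B * c * (1 / 2) ^ i * a y z := by
                      have : (c * n) ^ i ≤ (1 / 2 : ℝ) ^ i :=
                        pow_le_pow_left₀ hq0 hq i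
                      have h4 : 0 ≤ B * c := by positivity
                      have h5 : 0 ≤ a y z := (hapos y z).le
                      nlinarith [mul_le_mul_of_nonneg_left this h4]
              · rw [pow_zero, Matrix.one_mul, Matrix.diagonal_apply_ne _ hyz, norm_zero]
          _ = (∑ i ∈ Finset.range k, (1 / 2 : ℝ) ^ i) * (B * c * a y z) := by
              rw [add_zero, Finset.sum_mul]
              exact Finset.sum_congr rfl fun i _ => by ring
          _ = B * c * (2 - 2 * (1 / 2) ^ k) * a y z := by rw [hgeo]; ring
      -- term 2
      have hterm2 : ‖(A ^ (k + 1) * T⁻¹) y z‖ ≤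
          (2 * B * c * (1 / 2) ^ k + (1 / 2) ^ (k + 1) * M) * a y z := by
        rw [Matrix.mul_apply]
        have hsplit : ∑ v : E, (A ^ (k + 1)) y v * T⁻¹ v z =
            (∑ v ∈ Finset.univ.erase z, (A ^ (k + 1)) y v * T⁻¹ v z) +
            (A ^ (k + 1)) y z * T⁻¹ z z := by
          rw [Finset.sum_erase_add _ _ (Finset.mem_univ z)]
        rw [hsplit]
        have hb1 : ‖∑ v ∈ Finset.univ.erase z, (A ^ (k + 1)) y v * T⁻¹ v z‖ ≤
            n * (c ^ (k + 1) * n ^ k * M * a y z) := by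
          calc ‖∑ v ∈ Finset.univ.erase z, (A ^ (k + 1)) y v * T⁻¹ v z‖
              ≤ ∑ v ∈ Finset.univ.erase z, ‖(A ^ (k + 1)) y v * T⁻¹ v z‖ := norm_sum_le _ _
            _ ≤ ∑ _v ∈ Finset.univ.erase z, c ^ (k + 1) * n ^ k * M * a y z := by
                apply Finset.sum_le_sum
                intro v hv
                have hvz : v ≠ z := Finset.ne_of_mem_erase hv
                rw [norm_mul]
                calc ‖(A ^ (k + 1)) y v‖ * ‖T⁻¹ v z‖
                    ≤ (c ^ (k + 1) * n ^ k * a y v) * (M * a v z) := by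
                      apply mul_le_mul (hpow k y v) (hfM v z hvz) (norm_nonneg _)
                      exact mul_nonneg (mul_nonneg (pow_nonneg hcpos.le _) (pow_nonneg hn0 _)) (hapos y v).le
                  _ = (c ^ (k + 1) * n ^ k * M) * (a y v * a v z) := by ring
                  _ ≤ (c ^ (k + 1) * n ^ k * M) * a y z := by
                      apply mul_le_mul_of_nonneg_left (hamul y z v)
                      exact mul_nonneg (mul_nonneg (pow_nonneg hcpos.le _) (pow_nonneg hn0 _)) hM0
                  _ = c ^ (k + 1) * n ^ k * M * a y z := by ring
            _ ≤ n * (c ^ (k + 1) * n ^ k * M * a y z) := by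
                rw [Finset.sum_const, nsmul_eq_mul]
                apply mul_le_mul_of_nonneg_right _ (mul_nonneg (mul_nonneg (mul_nonneg (pow_nonneg hcpos.le _) (pow_nonneg hn0 _)) hM0) (hapos y z).le)
                rw [hn]
                exact_mod_cast Finset.card_le_card (Finset.subset_univ _) |>.trans
                  (le_of_eq (by rw [Finset.card_univ, Fintype.card_coe]))
        have hb2 : ‖(A ^ (k + 1)) y z * T⁻¹ z z‖ ≤
            c ^ (k + 1) * n ^ k * a y z * (2 * B) := by
          rw [norm_mul]
          apply mul_le_mul (hpow k y z) (hTinv_entry z z) (norm_nonneg _)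
          exact mul_nonneg (mul_nonneg (pow_nonneg hcpos.le _) (pow_nonneg hn0 _)) (hapos y z).le
        calc ‖(∑ v ∈ Finset.univ.erase z, (A ^ (k + 1)) y v * T⁻¹ v z) +
              (A ^ (k + 1)) y z * T⁻¹ z z‖
            ≤ ‖∑ v ∈ Finset.univ.erase z, (A ^ (k + 1)) y v * T⁻¹ v z‖ +
              ‖(A ^ (k + 1)) y z * T⁻¹ z z‖ := norm_add_le _ _
          _ ≤ n * (c ^ (k + 1) * n ^ k * M * a y z) +
              c ^ (k + 1) * n ^ k * a y z * (2 * B) := add_le_add hb1 hb2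
          _ = ((c * n) ^ (k + 1) * M + 2 * B * c * (c * n) ^ k) * a y z := by ring
          _ ≤ ((1 / 2) ^ (k + 1) * M + 2 * B * c * (1 / 2) ^ k) * a y z := by
              apply mul_le_mul_of_nonneg_right _ (hapos y z).le
              have h6 : (c * n) ^ (k + 1) ≤ (1 / 2 : ℝ) ^ (k + 1) :=
                pow_le_pow_left₀ hq0 hq (k + 1)
              have h7 : (c * n) ^ k ≤ (1 / 2 : ℝ) ^ k := pow_le_pow_left₀ hq0 hq k
              have h8 : 0 ≤ 2 * B * c := by positivity
              nlinarith [mul_le_mul_of_nonneg_left h7 h8,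
                mul_le_mul_of_nonneg_right h6 hM0]
          _ = (2 * B * c * (1 / 2) ^ k + (1 / 2) ^ (k + 1) * M) * a y z := by ring
      calc ‖T⁻¹ y z‖
          ≤ ‖∑ i ∈ Finset.range (k + 1), (A ^ i * Matrix.diagonal d) y z‖ +
            ‖(A ^ (k + 1) * T⁻¹) y z‖ := by
            rw [hentry]; exact norm_add_le _ _
        _ ≤ B * c * (2 - 2 * (1 / 2) ^ k) * a y z +
            (2 * B * c * (1 / 2) ^ k + (1 / 2) ^ (k + 1) * M) * a y z :=
            add_le_add hterm1 hterm2
        _ = (2 * B * c + (1 / 2) ^ (k + 1) * M) * a y z := by ring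
    -- sup bound
    have hMle : ∀ k : ℕ, M ≤ 2 * B * c + (1 / 2) ^ (k + 1) * M := by
      intro k
      rw [hMdef]
      apply Finset.sup'_le
      rintro ⟨y, z⟩ hp
      have hyz : y ≠ z := by
        simpa [hP] using hp
      have := hEst k y z hyz
      calc f (y, z) = ‖T⁻¹ y z‖ * w y z := rfl
        _ ≤ ((2 * B * c + (1 / 2) ^ (k + 1) * M) * a y z) * w y z :=
            mul_le_mul_of_nonneg_right this (hwpos y z).le
        _ = (2 * B * c + (1 / 2) ^ (k + 1) * M) * (a y z * w y z) := by ring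
        _ = 2 * B * c + (1 / 2) ^ (k + 1) * M := by rw [hwa y z, mul_one]
    have hMfin : M ≤ 2 * B * c := by
      by_contra hcon
      push_neg at hcon
      have hMpos : 0 < M := lt_of_le_of_lt (by positivity) hcon
      have hδ : 0 < (M - 2 * B * c) / M := div_pos (by linarith) hMpos
      obtain ⟨k, hk⟩ := exists_pow_lt_of_lt_one hδ (by norm_num : (1:ℝ)/2 < 1)
      have h9 : (1 / 2 : ℝ) ^ (k + 1) ≤ (1 / 2 : ℝ) ^ k :=
        pow_le_pow_of_le_one (by norm_num) (by norm_num) (Nat.le_succ k)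
      have h10 := hMle k
      have h11 : (1 / 2 : ℝ) ^ k * M < ((M - 2 * B * c) / M) * M :=
        mul_lt_mul_of_pos_right hk hMpos
      rw [div_mul_cancel₀ _ hMpos.ne'] at h11
      nlinarith [mul_le_mul_of_nonneg_right h9 hM0]
    calc ‖T⁻¹ x x'‖ ≤ M * a x x' := hfM x x' hne
      _ ≤ (2 * B * c) * a x x' := mul_le_mul_of_nonneg_right hMfin (hapos x x').le
      _ = 2 * ε * K * B ^ 2 *
          Real.exp (-(α * L * adist α ((x : Fin m → ℤ) - (x' : Fin m → ℤ)))) := by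
          rw [ha, hc]; ring
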